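/- Let μ be a finite absolutely continuous Borel measure on ℝ^n, let H be the halfspace {x : ⟨x,θ⟩ ≤ c} for a unit vector θ and c ∈ ℝ, with μ(H) > 0. Then for every Borel set A ⊆ ℝ^n with μ(A) > 0 and b_{μ,θ}(A) = b_{μ,θ}(H), one has μ(A) ≤ μ(H), with equality only if μ(H △ A) = 0. -/

import Mathlib

open MeasureTheory Set RealInnerProductSpace

/-- Halfspaces maximize measure among sets with the same barycenter coordinate in the
normal direction: if `H = {x : ⟪x,θ⟫ ≤ c}` with `θ` a unit vector and `μ(H) > 0`,
then for every Borel set `A` with `μ(A) > 0` and `b_{μ,θ}(A) = b_{μ,θ}(H)`, one has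
`μ(A) ≤ μ(H)`, with equality only if `μ(H △ A) = 0`. -/
theorem halfspace_maximizer (n : ℕ) (μ : Measure (EuclideanSpace ℝ (Fin n)))
    [IsFiniteMeasure μ] (hac : μ ≪ volume)
    (hmom : Integrable (fun x => ‖x‖) μ)
    (θ : EuclideanSpace ℝ (Fin n)) (hθ : ‖θ‖ = 1) (c : ℝ)
    (H : Set (EuclideanSpace ℝ (Fin n))) (hH : H = {x | ⟪x, θ⟫ ≤ c})
    (hHpos : 0 < μ H)
    (A : Set (EuclideanSpace ℝ (Fin n))) (hA : MeasurableSet A) (hApos : 0 < μ A)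
    (hbar : (μ A).toReal⁻¹ * ∫ x in A, ⟪x, θ⟫ ∂μ
          = (μ H).toReal⁻¹ * ∫ x in H, ⟪x, θ⟫ ∂μ) :
    μ A ≤ μ H ∧ (μ A = μ H → μ (symmDiff H A) = 0) := by
  -- the hyperplane has measure zero
  have hθθ : ⟪θ, θ⟫ = 1 := by
    rw [real_inner_self_eq_norm_sq, hθ]; norm_num
  have hhyp : μ {x : EuclideanSpace ℝ (Fin n) | ⟪x, θ⟫ = c} = 0 := by
    apply hac
    have hker : LinearMap.ker (innerSL ℝ θ).toLinearMap ≠ ⊤ := by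
      intro h
      have : θ ∈ LinearMap.ker (innerSL ℝ θ).toLinearMap := h ▸ Submodule.mem_top
      simp only [LinearMap.mem_ker, ContinuousLinearMap.coe_coe, innerSL_apply_apply] at this
      rw [this] at hθθ; norm_num at hθθ
    have hset : {x : EuclideanSpace ℝ (Fin n) | ⟪x, θ⟫ = c}
        = (· + c • θ) '' (LinearMap.ker (innerSL ℝ θ).toLinearMap :
            Set (EuclideanSpace ℝ (Fin n))) := by
      ext x
      simp only [mem_setOf_eq, mem_image, SetLike.mem_coe, LinearMap.mem_ker,
        ContinuousLinearMap.coe_coe, innerSL_apply_apply]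
      constructor
      · intro hx
        exact ⟨x - c • θ, by
          rw [real_inner_comm, inner_sub_left, real_inner_smul_left, hθθ, hx]; ring, by abel⟩
      · rintro ⟨y, hy, rfl⟩
        rw [inner_add_left, real_inner_smul_left, hθθ, real_inner_comm, hy]; ring
    rw [hset, image_add_right, measure_preimage_add_right]
    exact Measure.addHaar_submodule _ _ hker
  -- basic facts about f x = ⟪x, θ⟫ and g x = c - f x
  have hfc : Continuous fun x : EuclideanSpace ℝ (Fin n) => ⟪x, θ⟫ :=
    Continuous.inner continuous_id continuous_const
  have hHm : MeasurableSet H := by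
    rw [hH]; exact measurableSet_le hfc.measurable measurable_const
  have hfint : Integrable (fun x => ⟪x, θ⟫) μ := by
    refine hmom.mono' hfc.aestronglyMeasurable (ae_of_all _ fun x => ?_)
    calc ‖⟪x, θ⟫‖ = |⟪x, θ⟫| := rfl
      _ ≤ ‖x‖ * ‖θ‖ := abs_real_inner_le_norm x θ
      _ = ‖x‖ := by rw [hθ, mul_one]
  set g : EuclideanSpace ℝ (Fin n) → ℝ := fun x => c - ⟪x, θ⟫ with hg
  have hgint : Integrable g μ := (integrable_const c).sub hfint
  have hgm : Measurable g := measurable_const.sub hfc.measurable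
  -- measures as reals
  set aA := (μ A).toReal with haA
  set aH := (μ H).toReal with haH
  have hAne : μ A ≠ ⊤ := measure_ne_top μ A
  have hHne : μ H ≠ ⊤ := measure_ne_top μ H
  have haApos : 0 < aA := ENNReal.toReal_pos hApos.ne' hAne
  have haHpos : 0 < aH := ENNReal.toReal_pos hHpos.ne' hHne
  set b := (μ H).toReal⁻¹ * ∫ x in H, ⟪x, θ⟫ ∂μ with hb
  have hIA : ∫ x in A, ⟪x, θ⟫ ∂μ = aA * b := by
    rw [← hbar]; field_simp
  have hIH : ∫ x in H, ⟪x, θ⟫ ∂μ = aH * b := by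
    rw [hb, ← haH, ← mul_assoc, mul_inv_cancel₀ haHpos.ne', one_mul]
  have hgA : ∫ x in A, g x ∂μ = aA * (c - b) := by
    rw [hg]
    rw [integral_sub (integrable_const c).integrableOn hfint.integrableOn,
      setIntegral_const, hIA]
    simp only [smul_eq_mul]; rw [show μ.real A = aA from rfl]; ring
  have hgH : ∫ x in H, g x ∂μ = aH * (c - b) := by
    rw [hg]
    rw [integral_sub (integrable_const c).integrableOn hfint.integrableOn,
      setIntegral_const, hIH]
    simp only [smul_eq_mul]; rw [show μ.real H = aH from rfl]; ring
  -- positivity of ∫_H g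
  have hgnonnegH : ∀ x ∈ H, 0 ≤ g x := by
    intro x hx; rw [hH] at hx; simp only [mem_setOf_eq] at hx
    simp only [hg]; linarith
  have hposH : 0 < ∫ x in H, g x ∂μ := by
    rw [setIntegral_pos_iff_support_of_nonneg_ae
      ((ae_restrict_iff' hHm).2 (ae_of_all _ hgnonnegH)) hgint.integrableOn]
    have hsub : H ⊆ (Function.support g ∩ H) ∪ {x | ⟪x, θ⟫ = c} := by
      intro x hx
      by_cases hxc : ⟪x, θ⟫ = c
      · exact Or.inr hxc
      · refine Or.inl ⟨?_, hx⟩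
        simp only [Function.mem_support, hg]
        intro h; exact hxc (by linarith [sub_eq_zero.mp h])
      -- note sub_eq_zero: c - ⟪x,θ⟫ = 0 → c = ⟪x,θ⟫
    calc (0 : ENNReal) < μ H := hHpos
      _ ≤ μ ((Function.support g ∩ H) ∪ {x | ⟪x, θ⟫ = c}) := measure_mono hsub
      _ ≤ μ (Function.support g ∩ H) + μ {x | ⟪x, θ⟫ = c} := measure_union_le _ _
      _ = μ (Function.support g ∩ H) := by rw [hhyp, add_zero]
  have hcb : 0 < c - b := by
    rw [hgH] at hposH
    rcases mul_pos_iff.mp hposH with ⟨_, h⟩ | ⟨h, _⟩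
    · exact h
    · linarith
  -- decompositions
  have dj1 : Disjoint (H ∩ A) (H \ A) :=
    disjoint_sdiff_self_right.mono_left inter_subset_right
  have dj2 : Disjoint (A ∩ H) (A \ H) :=
    disjoint_sdiff_self_right.mono_left inter_subset_right
  have e1 : ∫ x in H, g x ∂μ = (∫ x in H ∩ A, g x ∂μ) + ∫ x in H \ A, g x ∂μ := by
    rw [← setIntegral_union dj1 (hHm.diff hA) hgint.integrableOn hgint.integrableOn,
      inter_union_diff]
  have e2 : ∫ x in A, g x ∂μ = (∫ x in A ∩ H, g x ∂μ) + ∫ x in A \ H, g x ∂μ := by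
    rw [← setIntegral_union dj2 (hA.diff hHm) hgint.integrableOn hgint.integrableOn,
      inter_union_diff]
  have hgnegAH : ∀ x ∈ A \ H, g x < 0 := by
    intro x hx
    have : ¬ ⟪x, θ⟫ ≤ c := by rw [hH] at hx; exact hx.2
    simp only [hg]; linarith [not_le.mp this]
  have hP : 0 ≤ ∫ x in H \ A, g x ∂μ :=
    setIntegral_nonneg (hHm.diff hA) (fun x hx => hgnonnegH x hx.1)
  have hN : ∫ x in A \ H, g x ∂μ ≤ 0 :=
    setIntegral_nonpos (hA.diff hHm) (fun x hx => (hgnegAH x hx).le)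
  have key : aH * (c - b) - aA * (c - b)
      = (∫ x in H \ A, g x ∂μ) - ∫ x in A \ H, g x ∂μ := by
    rw [← hgH, ← hgA, e1, e2, inter_comm]; ring
  have hle : aA ≤ aH := by nlinarith [key, hP, hN, hcb]
  refine ⟨(ENNReal.toReal_le_toReal hAne hHne).mp hle, fun heq => ?_⟩
  -- equality case
  have haeq : aA = aH := by rw [haA, haH, heq]
  have hP0 : ∫ x in H \ A, g x ∂μ = 0 := by
    have := key; rw [haeq] at this; linarith
  have hN0 : ∫ x in A \ H, g x ∂μ = 0 := by
    have := key; rw [haeq] at this; linarith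
  -- μ (H \ A) = 0
  have hHA : μ (H \ A) = 0 := by
    have hae : g =ᵐ[μ.restrict (H \ A)] 0 :=
      (setIntegral_eq_zero_iff_of_nonneg_ae
        ((ae_restrict_iff' (hHm.diff hA)).2 (ae_of_all _ fun x hx => hgnonnegH x hx.1))
        hgint.integrableOn).mp hP0
    have h0 : μ ({x | g x ≠ 0} ∩ (H \ A)) = 0 := by
      have h1 := ae_iff.mp hae
      simp only [Pi.zero_apply] at h1
      rwa [Measure.restrict_apply (by
        exact (hgm (measurableSet_singleton 0)).compl : MeasurableSet {x | ¬ g x = 0})] at h1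
    have hsub : H \ A ⊆ ({x | g x ≠ 0} ∩ (H \ A)) ∪ {x | ⟪x, θ⟫ = c} := by
      intro x hx
      by_cases hgx : g x = 0
      · refine Or.inr ?_
        simp only [hg] at hgx
        simp only [mem_setOf_eq]; linarith
      · exact Or.inl ⟨hgx, hx⟩
    refine le_antisymm ?_ zero_le
    calc μ (H \ A) ≤ μ (({x | g x ≠ 0} ∩ (H \ A)) ∪ {x | ⟪x, θ⟫ = c}) := measure_mono hsub
      _ ≤ μ ({x | g x ≠ 0} ∩ (H \ A)) + μ {x | ⟪x, θ⟫ = c} := measure_union_le _ _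
      _ = 0 := by rw [h0, hhyp, add_zero]
  -- μ (A \ H) = 0
  have hAH : μ (A \ H) = 0 := by
    have hneg0 : ∫ x in A \ H, (-g) x ∂μ = 0 := by
      simp only [Pi.neg_apply]
      rw [integral_neg, hN0, neg_zero]
    have hae : (-g) =ᵐ[μ.restrict (A \ H)] 0 :=
      (setIntegral_eq_zero_iff_of_nonneg_ae
        ((ae_restrict_iff' (hA.diff hHm)).2 (ae_of_all _ fun x hx => by
          simp only [Pi.neg_apply, Pi.zero_apply]; linarith [hgnegAH x hx]))
        hgint.neg.integrableOn).mp hneg0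
    have h0 : μ ({x | g x ≠ 0} ∩ (A \ H)) = 0 := by
      have h1 := ae_iff.mp hae
      simp only [Pi.neg_apply, Pi.zero_apply, neg_eq_zero] at h1
      rwa [Measure.restrict_apply (by
        exact (hgm (measurableSet_singleton 0)).compl : MeasurableSet {x | ¬ g x = 0})] at h1
    have hsub : A \ H ⊆ {x | g x ≠ 0} ∩ (A \ H) :=
      fun x hx => ⟨(hgnegAH x hx).ne, hx⟩
    exact le_antisymm (h0 ▸ measure_mono hsub) zero_le
  rw [Set.symmDiff_def]
  exact le_antisymm ((measure_union_le _ _).trans (le_of_eq (by rw [hHA, hAH, add_zero])))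
    zero_le
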